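/- For 0 < α ≤ 1 and λ ∈ ℂ, the function y(t) = E_α(λ t^α) y(0), where E_α is the Mittag-Leffler function, satisfies the Caputo fractional differential equation ∂_t^α y(t) = λ y(t) for t > 0. -/

import Mathlib

open MeasureTheory

/-- The Mittag-Leffler function `E_α(z) = Σ z^k / Γ(αk+1)`. -/
noncomputable def mittagLeffler (α : ℝ) (z : ℂ) : ℂ :=
  ∑' k : ℕ, z ^ k / Complex.Gamma (α * k + 1)

/-- The Caputo fractional derivative of order `0 < α ≤ 1`
(the ordinary derivative when `α = 1`). -/
noncomputable def caputoDeriv (α : ℝ) (y : ℝ → ℂ) (t : ℝ) : ℂ :=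
  if α = 1 then deriv y t
  else (1 / Complex.Gamma (1 - α)) *
    ∫ τ in Set.Ioo (0 : ℝ) t, deriv y τ * (((t - τ) ^ (-α) : ℝ) : ℂ)

namespace MLCaputoAux

open Real Set Filter MeasureTheory
open scoped Topology


lemma gamma_interp {α : ℝ} (hα0 : 0 < α) (hα1 : α ≤ 1) {x : ℝ} (hx : 0 < x) :
    x * Real.Gamma x ≤ (x + α) ^ (1 - α) * Real.Gamma (x + α) := by
  have hxα : (0:ℝ) < x + α := by linarith
  have h := Real.convexOn_log_Gamma.2 (mem_Ioi.mpr hxα) (mem_Ioi.mpr (by linarith : (0:ℝ) < x + α + 1))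
      hα0.le (by linarith : (0:ℝ) ≤ 1 - α) (by ring)
  have hcomb : α • (x + α) + (1 - α) • (x + α + 1) = x + 1 := by
    simp only [smul_eq_mul]; ring
  rw [hcomb] at h
  simp only [Function.comp_apply, smul_eq_mul] at h
  have hG1 : Real.Gamma (x + α + 1) = (x + α) * Real.Gamma (x + α) := Real.Gamma_add_one hxα.ne'
  have hGpos : 0 < Real.Gamma (x + α) := Real.Gamma_pos_of_pos hxα
  have hGpos1 : 0 < Real.Gamma (x + 1) := Real.Gamma_pos_of_pos (by linarith)
  rw [hG1, Real.log_mul hxα.ne' hGpos.ne'] at h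
  -- h : log Γ(x+1) ≤ α * log Γ(x+α) + (1-α) * (log (x+α) + log Γ(x+α))
  have h2 : Real.log (Real.Gamma (x + 1)) ≤ Real.log (Real.Gamma (x+α)) + (1-α) * Real.log (x+α) := by
    nlinarith [h]
  have := Real.exp_le_exp.mpr h2
  rw [Real.exp_log hGpos1, Real.exp_add, Real.exp_log hGpos] at this
  rw [Real.Gamma_add_one hx.ne'] at this
  calc x * Real.Gamma x ≤ Real.Gamma (x+α) * Real.exp ((1-α) * Real.log (x+α)) := this
    _ = (x + α) ^ (1 - α) * Real.Gamma (x + α) := by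
        rw [Real.rpow_def_of_pos hxα, mul_comm (Real.log _)]; ring


lemma summable_aux {α : ℝ} (hα0 : 0 < α) (hα1 : α ≤ 1) {C c : ℝ} (hC : 0 ≤ C) (hc : 0 < c) :
    Summable (fun k : ℕ => C ^ k * (k + 1) / Real.Gamma (α * k + c)) := by
  obtain ⟨D, hD1, hCD⟩ : ∃ D : ℝ, 1 ≤ D ∧ C ≤ D := ⟨C + 1, by linarith, by linarith⟩
  have hD0 : (0:ℝ) < D := by linarith
  have key : Summable (fun k : ℕ => D ^ k * (k + 1) / Real.Gamma (α * k + c)) := by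
    apply summable_of_ratio_norm_eventually_le (r := 1/2) (by norm_num)
    -- eventual facts
    have htend : Tendsto (fun k : ℕ => α * k + c) atTop atTop := by
      apply Filter.tendsto_atTop_add_const_right
      exact (tendsto_natCast_atTop_atTop (R := ℝ)).const_mul_atTop hα0
    have h1 : ∀ᶠ k : ℕ in atTop, α * k + c ≥ 1 := htend.eventually_ge_atTop 1
    have h2 : ∀ᶠ k : ℕ in atTop, ((α * k + c + α) ^ α) ≥ 8 * D := by
      have : Tendsto (fun k : ℕ => (α * k + c + α) ^ α) atTop atTop :=
        (tendsto_rpow_atTop hα0).comp (Filter.tendsto_atTop_add_const_right _ α htend)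
      exact this.eventually_ge_atTop (8 * D)
    filter_upwards [h1, h2] with k hx1 hM
    set x := α * k + c with hxdef
    have hx0 : (0:ℝ) < x := by linarith
    have hxα : (0:ℝ) < x + α := by linarith
    have hGx : 0 < Real.Gamma x := Real.Gamma_pos_of_pos hx0
    have hGxα : 0 < Real.Gamma (x + α) := Real.Gamma_pos_of_pos hxα
    have hxk1 : α * (k+1 : ℕ) + c = x + α := by push_cast; ring
    rw [hxk1]
    have hterm1 : (0:ℝ) ≤ D ^ (k+1) * ((k:ℝ)+1+1) / Real.Gamma (x+α) := by positivity
    rw [Real.norm_eq_abs, Real.norm_eq_abs, abs_of_nonneg (by positivity),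
      abs_of_nonneg (by positivity)]
    push_cast
    -- goal : D^(k+1) * (k+2) / Γ(x+α) ≤ 1/2 * (D^k * (k+1) / Γ x)
    rw [div_le_iff₀ hGxα,
      show (1:ℝ)/2 * (D^k * ((k:ℝ)+1) / Real.Gamma x) = (D^k * ((k:ℝ)+1) * (1/2)) / Real.Gamma x by ring,
      div_mul_eq_mul_div, le_div_iff₀ hGx]
    -- D^(k+1) * (k+2) * Γ x ≤ D^k * (k+1) * (1/2) * Γ (x+α)
    have hinterp := gamma_interp hα0 hα1 hx0
    -- (x+α)^(1-α) ≤ x / (4*D)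
    have hpow : (x + α) ^ (1 - α) ≤ x / (4 * D) := by
      have e1 : (x + α) ^ (1 - α) = (x + α) / (x + α) ^ α := by
        rw [Real.rpow_sub hxα, Real.rpow_one]
      rw [e1]
      have h2x : x + α ≤ 2 * x := by linarith [hα1, hx1]
      calc (x + α) / (x + α) ^ α ≤ (2 * x) / (8 * D) := by
            apply div_le_div₀ (by positivity) h2x (by positivity) hM
        _ = x / (4 * D) := by
              rw [div_eq_div_iff (by positivity) (by positivity)]; ring
    have hGineq : Real.Gamma x ≤ x / (4 * D) * Real.Gamma (x + α) / x := by
      rw [div_mul_eq_mul_div, le_div_iff₀ hx0, mul_comm (Real.Gamma x)]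
      calc x * Real.Gamma x ≤ (x + α) ^ (1-α) * Real.Gamma (x+α) := hinterp
        _ ≤ x / (4*D) * Real.Gamma (x+α) := by
            apply mul_le_mul_of_nonneg_right hpow hGxα.le
        _ = x * Real.Gamma (x+α) / (4*D) := by ring
    calc D ^ (k+1) * ((k:ℝ) + 1 + 1) * Real.Gamma x
        ≤ D ^ (k+1) * ((k:ℝ) + 1 + 1) * (x / (4 * D) * Real.Gamma (x + α) / x) := by
          apply mul_le_mul_of_nonneg_left hGineq (by positivity)
      _ = D ^ k * ((k:ℝ) + 1 + 1) / 4 * Real.Gamma (x + α) := by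
          field_simp; ring
      _ ≤ D ^ k * (2 * ((k:ℝ) + 1)) / 4 * Real.Gamma (x + α) := by
          gcongr
          linarith [Nat.cast_nonneg (α := ℝ) k]
      _ = D ^ k * ((k:ℝ) + 1) * (1/2) * Real.Gamma (x + α) := by ring
  apply Summable.of_nonneg_of_le (fun k => ?_) (fun k => ?_) key
  · have : 0 < Real.Gamma (α * k + c) := Real.Gamma_pos_of_pos (by positivity)
    positivity
  · have h0 : 0 < Real.Gamma (α * k + c) := Real.Gamma_pos_of_pos (by positivity)
    have hk : (0:ℝ) ≤ (k:ℝ) + 1 := by positivity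
    gcongr





lemma beta_integrable {a b t : ℝ} (ha : 0 < a) (hb : 0 < b) (ht : 0 < t) :
    IntegrableOn (fun τ : ℝ => τ ^ (a-1) * (t - τ) ^ (b-1)) (Set.Ioo 0 t) := by
  have hconv := Complex.betaIntegral_convergent (u := (a:ℂ)) (v := (b:ℂ))
    (by simpa using ha) (by simpa using hb)
  have h2 := hconv.comp_mul_left (c := 1/t)
  rw [show (0:ℝ)/(1/t) = 0 by simp, show (1:ℝ)/(1/t) = t by field_simp] at h2
  have h3 : IntegrableOn (fun x : ℝ =>
      ((1/t*x : ℝ) : ℂ) ^ ((a:ℂ)-1) * (1 - ((1/t*x : ℝ) : ℂ)) ^ ((b:ℂ)-1)) (Set.Ioo 0 t) := by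
    have := h2.1
    exact (this.mono_set Set.Ioo_subset_Ioc_self)
  have h4 := (h3.re.const_mul (t ^ (a-1) * t ^ (b-1)))
  apply MeasureTheory.IntegrableOn.congr_fun h4 ?_ measurableSet_Ioo
  intro τ hτ
  obtain ⟨hτ0, hτt⟩ := hτ
  have hs0 : (0:ℝ) ≤ 1/t*τ := by positivity
  have hs1 : 1/t*τ ≤ 1 := by rw [div_mul_eq_mul_div, div_le_one ht]; linarith
  have e1 : ((1/t*τ : ℝ) : ℂ) ^ ((a:ℂ)-1) = ((( 1/t*τ) ^ (a-1) : ℝ) : ℂ) := by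
    rw [Complex.ofReal_cpow hs0]; push_cast; ring_nf
  have e2 : (1 - ((1/t*τ : ℝ) : ℂ)) ^ ((b:ℂ)-1) = (((1 - 1/t*τ) ^ (b-1) : ℝ) : ℂ) := by
    rw [Complex.ofReal_cpow (by linarith)]; push_cast; ring_nf
  simp only [e1, e2, ← Complex.ofReal_mul, RCLike.re_to_complex, Complex.ofReal_re]
  have f1 : τ ^ (a-1) = t ^ (a-1) * (1/t*τ) ^ (a-1) := by
    rw [← Real.mul_rpow ht.le hs0, show t * (1/t*τ) = τ by field_simp]
  have f2 : (t - τ) ^ (b-1) = t ^ (b-1) * (1 - 1/t*τ) ^ (b-1) := by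
    rw [← Real.mul_rpow ht.le (by linarith), show t * (1 - 1/t*τ) = t - τ by field_simp]
  rw [f1, f2]; ring

lemma beta_Ioo {a b t : ℝ} (ha : 0 < a) (hb : 0 < b) (ht : 0 < t) :
    ∫ τ in Set.Ioo 0 t, τ ^ (a-1) * (t - τ) ^ (b-1) =
      Real.Gamma a * Real.Gamma b / Real.Gamma (a+b) * t ^ (a+b-1) := by
  have h1 := Complex.betaIntegral_scaled (a:ℂ) (b:ℂ) ht
  rw [intervalIntegral.integral_of_le ht.le, MeasureTheory.integral_Ioc_eq_integral_Ioo] at h1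
  have h2 : ∫ τ in Set.Ioo (0:ℝ) t, (τ:ℂ) ^ ((a:ℂ)-1) * ((t:ℂ) - τ) ^ ((b:ℂ)-1)
      = ∫ τ in Set.Ioo (0:ℝ) t, ((τ ^ (a-1) * (t - τ) ^ (b-1) : ℝ) : ℂ) := by
    apply setIntegral_congr_fun measurableSet_Ioo
    intro τ hτ
    show (τ:ℂ) ^ ((a:ℂ)-1) * ((t:ℂ) - τ) ^ ((b:ℂ)-1) = ((τ ^ (a-1) * (t - τ) ^ (b-1) : ℝ) : ℂ)
    rw [Complex.ofReal_mul, Complex.ofReal_cpow hτ.1.le, Complex.ofReal_cpow (by linarith [hτ.2])]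
    push_cast
    ring
  have hbeta : Complex.betaIntegral a b
      = Complex.Gamma a * Complex.Gamma b / Complex.Gamma ((a:ℂ)+b) := by
    have h3 := Complex.Gamma_mul_Gamma_eq_betaIntegral
      (s := (a:ℂ)) (t := (b:ℂ)) (by simpa using ha) (by simpa using hb)
    have hne : Complex.Gamma ((a:ℂ)+b) ≠ 0 := by
      rw [show ((a:ℂ)+b) = ((a+b : ℝ) : ℂ) by push_cast; ring, Complex.Gamma_ofReal]
      exact_mod_cast (Real.Gamma_pos_of_pos (by linarith)).ne'
    rw [eq_div_iff hne]
    linear_combination -h3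
  have hrhs : (t:ℂ) ^ ((a:ℂ) + b - 1) *
        (Complex.Gamma a * Complex.Gamma b / Complex.Gamma ((a:ℂ)+b))
      = ((Real.Gamma a * Real.Gamma b / Real.Gamma (a+b) * t ^ (a+b-1) : ℝ) : ℂ) := by
    rw [show ((a:ℂ) + b - 1) = ((a + b - 1 : ℝ) : ℂ) by push_cast; ring,
      show ((a:ℂ)+b) = ((a+b : ℝ) : ℂ) by push_cast; ring,
      ← Complex.ofReal_cpow ht.le, Complex.Gamma_ofReal, Complex.Gamma_ofReal,
      Complex.Gamma_ofReal]
    push_cast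
    ring
  have h5 : ((∫ τ in Set.Ioo (0:ℝ) t, τ ^ (a-1) * (t - τ) ^ (b-1) : ℝ) : ℂ)
      = ((Real.Gamma a * Real.Gamma b / Real.Gamma (a+b) * t ^ (a+b-1) : ℝ) : ℂ) :=
    calc ((∫ τ in Set.Ioo (0:ℝ) t, τ ^ (a-1) * (t - τ) ^ (b-1) : ℝ) : ℂ)
        = ∫ τ in Set.Ioo (0:ℝ) t, ((τ ^ (a-1) * (t - τ) ^ (b-1) : ℝ) : ℂ) :=
          _root_.integral_ofReal.symm
      _ = ∫ τ in Set.Ioo (0:ℝ) t, (τ:ℂ) ^ ((a:ℂ)-1) * ((t:ℂ) - τ) ^ ((b:ℂ)-1) := h2.symm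
      _ = (t:ℂ) ^ ((a:ℂ) + (b:ℂ) - 1) * Complex.betaIntegral a b := h1
      _ = ((Real.Gamma a * Real.Gamma b / Real.Gamma (a+b) * t ^ (a+b-1) : ℝ) : ℂ) := by
          rw [hbeta]; exact hrhs
  exact_mod_cast h5

lemma integral_ofReal' {s : Set ℝ} {f : ℝ → ℝ} :
    ∫ x in s, ((f x : ℝ) : ℂ) = ((∫ x in s, f x : ℝ) : ℂ) := integral_ofReal

noncomputable def Ck (α : ℝ) (lam y0 : ℂ) (k : ℕ) : ℂ :=
  lam ^ k * ((α * k : ℝ) : ℂ) / ((Real.Gamma (α * k + 1) : ℝ) : ℂ) * y0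



noncomputable def mlt (α : ℝ) (lam y0 : ℂ) (k : ℕ) (s : ℝ) : ℂ :=
  lam ^ k * ((s ^ (α * k) : ℝ) : ℂ) / ((Real.Gamma (α * k + 1) : ℝ) : ℂ) * y0

noncomputable def mlt' (α : ℝ) (lam y0 : ℂ) (k : ℕ) (s : ℝ) : ℂ :=
  lam ^ k * (((α * k) * s ^ (α * k - 1) : ℝ) : ℂ) / ((Real.Gamma (α * k + 1) : ℝ) : ℂ) * y0

lemma norm_mlt' {α : ℝ} (hα0 : 0 < α) (hα1 : α ≤ 1) (lam y0 : ℂ) {τ : ℝ} (hτ : 0 < τ)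
    (k : ℕ) {s : ℝ} (hs : s ∈ Set.Ioo (τ/2) (τ+1)) :
    ‖mlt' α lam y0 k s‖ ≤
      2/τ * ‖y0‖ * ((‖lam‖ * (τ+1) ^ α) ^ k * (k + 1) / Real.Gamma (α * k + 1)) := by
  obtain ⟨hs1, hs2⟩ := hs
  have hs0 : 0 < s := lt_trans (by positivity) hs1
  have hΓ : 0 < Real.Gamma (α * k + 1) := Real.Gamma_pos_of_pos (by positivity)
  have hknn : (0:ℝ) ≤ α * k := by positivity
  have e0 : ‖mlt' α lam y0 k s‖
      = ‖lam‖ ^ k * (α * k * s ^ (α * k - 1)) / Real.Gamma (α * k + 1) * ‖y0‖ := by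
    rw [mlt', norm_mul, norm_div, norm_mul, norm_pow, Complex.norm_real, Complex.norm_real, Real.norm_eq_abs, Real.norm_eq_abs,
      abs_of_nonneg (by positivity), abs_of_nonneg hΓ.le]
  rw [e0]
  have epow : (‖lam‖ * (τ+1) ^ α) ^ k = ‖lam‖ ^ k * (τ+1) ^ (α * k) := by
    rw [mul_pow, ← Real.rpow_natCast ((τ+1) ^ α) k, ← Real.rpow_mul (by positivity)]
  rw [epow]
  have key : α * k * s ^ (α * k - 1) ≤ (τ+1) ^ (α * k) * ((k:ℝ) + 1) * (2/τ) := by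
    have h1 : s ^ (α * k - 1) = s ^ (α * k) / s := by
      rw [Real.rpow_sub hs0, Real.rpow_one]
    have h2 : s ^ (α * k) ≤ (τ+1) ^ (α * k) :=
      Real.rpow_le_rpow hs0.le (by linarith) hknn
    have h3 : s ^ (α*k) / s ≤ (τ+1) ^ (α * k) * (2/τ) := by
      calc s ^ (α*k)/s ≤ (τ+1)^(α*k)/(τ/2) :=
            div_le_div₀ (by positivity) h2 (by positivity) hs1.le
        _ = (τ+1)^(α*k) * (2/τ) := by field_simp
    calc α * k * s ^ (α * k - 1) ≤ ((k:ℝ)+1) * s ^ (α * k - 1) := by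
          apply mul_le_mul_of_nonneg_right ?_ (by positivity)
          calc α * k ≤ 1 * k := by apply mul_le_mul_of_nonneg_right hα1 (by positivity)
            _ ≤ (k:ℝ) + 1 := by linarith
      _ = ((k:ℝ)+1) * (s ^ (α*k) / s) := by rw [h1]
      _ ≤ ((k:ℝ)+1) * ((τ+1) ^ (α * k) * (2/τ)) := by
          apply mul_le_mul_of_nonneg_left h3 (by positivity)
      _ = (τ+1) ^ (α * k) * ((k:ℝ) + 1) * (2/τ) := by ring
  calc ‖lam‖ ^ k * (α * k * s ^ (α * k - 1)) / Real.Gamma (α * k + 1) * ‖y0‖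
      ≤ ‖lam‖ ^ k * ((τ+1) ^ (α * k) * ((k:ℝ) + 1) * (2/τ)) / Real.Gamma (α * k + 1) * ‖y0‖ := by
        gcongr
    _ = 2/τ * ‖y0‖ * (‖lam‖ ^ k * (τ+1) ^ (α * k) * ((k:ℝ) + 1) / Real.Gamma (α * k + 1)) := by
        ring


lemma norm_mlt {α : ℝ} (hα0 : 0 < α) (hα1 : α ≤ 1) (lam y0 : ℂ) (k : ℕ) {R s : ℝ}
    (hs0 : 0 ≤ s) (hsR : s ≤ R) :
    ‖mlt α lam y0 k s‖ ≤ ‖y0‖ * ((‖lam‖ * R ^ α) ^ k * (k+1) / Real.Gamma (α * k + 1)) := by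
  have hR : 0 ≤ R := le_trans hs0 hsR
  have hΓ : 0 < Real.Gamma (α * k + 1) := Real.Gamma_pos_of_pos (by positivity)
  have e0 : ‖mlt α lam y0 k s‖ = ‖lam‖^k * s ^ (α*k) / Real.Gamma (α*k+1) * ‖y0‖ := by
    rw [mlt, norm_mul, norm_div, norm_mul, norm_pow, Complex.norm_real, Complex.norm_real,
      Real.norm_eq_abs, Real.norm_eq_abs, abs_of_nonneg (Real.rpow_nonneg hs0 _),
      abs_of_nonneg hΓ.le]
  rw [e0, mul_pow, ← Real.rpow_natCast (R ^ α) k, ← Real.rpow_mul hR]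
  calc ‖lam‖^k * s^(α*k) / Real.Gamma (α*k+1) * ‖y0‖
      ≤ ‖lam‖^k * (R^(α*(k:ℕ)) * ((k:ℝ)+1)) / Real.Gamma (α*k+1) * ‖y0‖ := by
        gcongr
        calc s ^ (α*(k:ℕ)) ≤ R ^ (α*(k:ℕ)) := Real.rpow_le_rpow hs0 hsR (by positivity)
          _ ≤ R^(α*(k:ℕ)) * ((k:ℝ)+1) := le_mul_of_one_le_right
              (by positivity) (by linarith [Nat.cast_nonneg (α := ℝ) k])
    _ = ‖y0‖ * (‖lam‖^k * R^(α*(k:ℕ)) * ((k:ℝ)+1) / Real.Gamma (α*(k:ℕ)+1)) := by ring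

lemma hasDerivAt_mlt {α : ℝ} (lam y0 : ℂ) (k : ℕ) {s : ℝ} (hs : 0 < s) :
    HasDerivAt (mlt α lam y0 k) (mlt' α lam y0 k s) s := by
  have h1 : HasDerivAt (fun x : ℝ => x ^ (α * k)) (α * k * s ^ (α * k - 1)) s :=
    Real.hasDerivAt_rpow_const (Or.inl hs.ne')
  have h2 := ((h1.ofReal_comp.const_mul (lam ^ k)).div_const
      ((Real.Gamma (α * k + 1) : ℝ) : ℂ)).mul_const y0
  exact h2

lemma summable_u {α : ℝ} (hα0 : 0 < α) (hα1 : α ≤ 1) (lam y0 : ℂ) {τ : ℝ} (hτ : 0 < τ) :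
    Summable (fun k : ℕ =>
      2/τ * ‖y0‖ * ((‖lam‖ * (τ+1) ^ α) ^ k * (k + 1) / Real.Gamma (α * k + 1))) :=
  (summable_aux hα0 hα1 (by positivity) one_pos).mul_left _

lemma ml_hasDerivAt_tsum {α : ℝ} (hα0 : 0 < α) (hα1 : α ≤ 1) (lam y0 : ℂ) {τ : ℝ} (hτ : 0 < τ) :
    HasDerivAt (fun s => ∑' k, mlt α lam y0 k s) (∑' k, mlt' α lam y0 k τ) τ := by
  have hU : τ ∈ Set.Ioo (τ/2) (τ+1) := ⟨by linarith, by linarith⟩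
  exact hasDerivAt_tsum_of_isPreconnected (summable_u hα0 hα1 lam y0 hτ) isOpen_Ioo
    (convex_Ioo _ _).isPreconnected
    (fun k s hsU => hasDerivAt_mlt lam y0 k (lt_trans (by positivity) hsU.1))
    (fun k s hsU => norm_mlt' hα0 hα1 lam y0 hτ k hsU) hU
    (Summable.of_norm_bounded
      ((summable_aux hα0 hα1 (C := ‖lam‖ * (τ+1)^α) (by positivity) one_pos).mul_left ‖y0‖)
      (fun k => norm_mlt hα0 hα1 lam y0 k hτ.le (by linarith))) hU

lemma summable_mlt' {α : ℝ} (hα0 : 0 < α) (hα1 : α ≤ 1) (lam y0 : ℂ) {τ : ℝ} (hτ : 0 < τ) :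
    Summable (fun k => mlt' α lam y0 k τ) :=
  Summable.of_norm_bounded (summable_u hα0 hα1 lam y0 hτ)
    (fun k => norm_mlt' hα0 hα1 lam y0 hτ k ⟨by linarith, by linarith⟩)

lemma yrep (α : ℝ) (hα0 : 0 < α) (lam y0 : ℂ) {s : ℝ} (hs : 0 ≤ s) :
    mittagLeffler α (lam * ((s ^ α : ℝ) : ℂ)) * y0 = ∑' k, mlt α lam y0 k s := by
  rw [mittagLeffler, ← tsum_mul_right]
  refine tsum_congr fun k => ?_
  rw [mlt, mul_pow, ← Complex.ofReal_pow, ← Real.rpow_natCast (s^α) k, ← Real.rpow_mul hs,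
    show ((α:ℂ) * (k:ℕ) + 1) = ((α * (k:ℕ) + 1 : ℝ) : ℂ) by push_cast; ring,
    Complex.Gamma_ofReal]

lemma deriv_y {α : ℝ} (hα0 : 0 < α) (hα1 : α ≤ 1) (lam y0 : ℂ) (y : ℝ → ℂ)
    (hy : ∀ t : ℝ, y t = mittagLeffler α (lam * ((t ^ α : ℝ) : ℂ)) * y0)
    {τ : ℝ} (hτ : 0 < τ) : deriv y τ = ∑' k, mlt' α lam y0 k τ := by
  have heq : y =ᶠ[nhds τ] (fun s => ∑' k, mlt α lam y0 k s) := by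
    filter_upwards [Ioi_mem_nhds hτ] with s hs
    rw [hy s, yrep α hα0 lam y0 (le_of_lt (Set.mem_Ioi.mp hs))]
  rw [heq.deriv_eq]
  exact (ml_hasDerivAt_tsum hα0 hα1 lam y0 hτ).deriv

lemma hke {α : ℝ} (lam y0 : ℂ) {t : ℝ} (k : ℕ) {τ : ℝ} (hτ : τ ∈ Set.Ioo 0 t) :
    mlt' α lam y0 k τ * (((t - τ) ^ (-α) : ℝ) : ℂ)
      = Ck α lam y0 k * ((τ ^ (α * k - 1) * (t - τ) ^ ((1-α) - 1) : ℝ) : ℂ) := by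
  rw [mlt', Ck, show (1-α) - 1 = -α by ring]
  push_cast
  ring

lemma integral_hk {α : ℝ} (hα0 : 0 < α) (hα1 : α < 1) (lam y0 : ℂ) {t : ℝ} (ht : 0 < t) (k : ℕ) :
    ∫ τ in Set.Ioo 0 t, mlt' α lam y0 (k+1) τ * (((t - τ) ^ (-α) : ℝ) : ℂ)
      = ((Real.Gamma (1-α) : ℝ) : ℂ) * (lam * mlt α lam y0 k t) := by
  have ha : 0 < α * ((k:ℕ)+1 : ℕ) := by positivity
  have hb : 0 < 1 - α := by linarith
  have step1 : ∫ τ in Set.Ioo 0 t, mlt' α lam y0 (k+1) τ * (((t - τ) ^ (-α) : ℝ) : ℂ)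
      = Ck α lam y0 (k+1) *
        ((Real.Gamma (α*(k+1:ℕ)) * Real.Gamma (1-α) / Real.Gamma (α*(k+1:ℕ) + (1-α))
          * t ^ (α*(k+1:ℕ) + (1-α) - 1) : ℝ) : ℂ) := by
    rw [setIntegral_congr_fun measurableSet_Ioo (fun τ hτ => hke lam y0 (k+1) hτ),
      MeasureTheory.integral_const_mul, integral_ofReal', beta_Ioo ha hb ht]
  rw [step1]
  -- now pure algebra
  have hΓsucc : Real.Gamma (α*((k:ℕ)+1:ℕ) + 1) = (α*((k:ℕ)+1:ℕ)) * Real.Gamma (α*((k:ℕ)+1:ℕ)) :=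
    Real.Gamma_add_one ha.ne'
  have e1 : α*((k:ℕ)+1:ℕ) + (1-α) = α*k + 1 := by push_cast; ring
  rw [Ck, mlt, e1, hΓsucc, show α*(k:ℝ)+1-1 = α*(k:ℝ) by ring]
  have hΓa : Real.Gamma (α*((k:ℕ)+1:ℕ)) ≠ 0 := (Real.Gamma_pos_of_pos ha).ne'
  have hΓk : Real.Gamma (α*(k:ℕ) + 1) ≠ 0 := (Real.Gamma_pos_of_pos (by positivity)).ne'
  have ha' : (α : ℝ) * ((k:ℕ)+1:ℕ) ≠ 0 := ha.ne'
  push_cast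
  have hΓa' : ((Real.Gamma (α*((k:ℝ)+1)) : ℝ) : ℂ) ≠ 0 := by
    simpa using hΓa
  have hΓk' : ((Real.Gamma (α*(k:ℝ) + 1) : ℝ) : ℂ) ≠ 0 := by
    simpa using hΓk
  have hαc : (α : ℂ) ≠ 0 := by exact_mod_cast hα0.ne'
  have hk1 : ((k:ℂ)+1) ≠ 0 := by exact_mod_cast Nat.cast_add_one_ne_zero (R := ℂ) k
  field_simp
  ring

lemma integral_hk_raw {α : ℝ} (hα0 : 0 < α) (hα1 : α < 1) (lam y0 : ℂ) {t : ℝ} (ht : 0 < t)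
    (k : ℕ) :
    ∫ τ in Set.Ioo 0 t, mlt' α lam y0 (k+1) τ * (((t - τ) ^ (-α) : ℝ) : ℂ)
      = Ck α lam y0 (k+1) *
        ((Real.Gamma (α*(k+1:ℕ)) * Real.Gamma (1-α) / Real.Gamma (α*(k+1:ℕ) + (1-α))
          * t ^ (α*(k+1:ℕ) + (1-α) - 1) : ℝ) : ℂ) := by
  have ha : 0 < α * ((k:ℕ)+1 : ℕ) := by positivity
  have hb : 0 < 1 - α := by linarith
  rw [setIntegral_congr_fun measurableSet_Ioo (fun τ hτ => hke lam y0 (k+1) hτ),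
    MeasureTheory.integral_const_mul, integral_ofReal', beta_Ioo ha hb ht]

lemma norm_int {α : ℝ} (hα0 : 0 < α) (hα1 : α < 1) (lam y0 : ℂ) {t : ℝ} (ht : 0 < t) (k : ℕ) :
    ∫ τ in Set.Ioo 0 t, ‖mlt' α lam y0 (k+1) τ * (((t - τ) ^ (-α) : ℝ) : ℂ)‖
      = Real.Gamma (1-α) * ‖lam‖ * ‖mlt α lam y0 k t‖ := by
  have ha : 0 < α * ((k:ℕ)+1 : ℕ) := by positivity
  have hb : 0 < 1 - α := by linarith
  have hbetapos : 0 ≤ Real.Gamma (α*(k+1:ℕ)) * Real.Gamma (1-α) / Real.Gamma (α*(k+1:ℕ) + (1-α))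
      * t ^ (α*(k+1:ℕ) + (1-α) - 1) := by
    have g1 := Real.Gamma_pos_of_pos ha
    have g2 := Real.Gamma_pos_of_pos hb
    have g3 := Real.Gamma_pos_of_pos (show (0:ℝ) < α*(k+1:ℕ) + (1-α) by positivity)
    positivity
  have step : ∫ τ in Set.Ioo 0 t, ‖mlt' α lam y0 (k+1) τ * (((t - τ) ^ (-α) : ℝ) : ℂ)‖
      = ‖Ck α lam y0 (k+1)‖ * (Real.Gamma (α*(k+1:ℕ)) * Real.Gamma (1-α)
          / Real.Gamma (α*(k+1:ℕ) + (1-α)) * t ^ (α*(k+1:ℕ) + (1-α) - 1)) := by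
    rw [setIntegral_congr_fun measurableSet_Ioo
        (g := fun τ : ℝ => ‖Ck α lam y0 (k+1)‖ * (τ ^ (α*(k+1:ℕ) - 1) * (t-τ) ^ ((1-α) - 1)))
        (fun τ hτ => ?_), MeasureTheory.integral_const_mul, beta_Ioo ha hb ht]
    rw [hke lam y0 (k+1) hτ, norm_mul, Complex.norm_real, Real.norm_eq_abs, abs_of_nonneg]
    exact mul_nonneg (Real.rpow_nonneg hτ.1.le _) (Real.rpow_nonneg (by linarith [hτ.2]) _)
  rw [step, show ‖Ck α lam y0 (k+1)‖ * (Real.Gamma (α*(k+1:ℕ)) * Real.Gamma (1-α)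
          / Real.Gamma (α*(k+1:ℕ) + (1-α)) * t ^ (α*(k+1:ℕ) + (1-α) - 1))
      = ‖Ck α lam y0 (k+1) * ((Real.Gamma (α*(k+1:ℕ)) * Real.Gamma (1-α)
          / Real.Gamma (α*(k+1:ℕ) + (1-α)) * t ^ (α*(k+1:ℕ) + (1-α) - 1) : ℝ) : ℂ)‖ by
        rw [norm_mul, Complex.norm_real, Real.norm_eq_abs, abs_of_nonneg hbetapos],
    ← integral_hk_raw hα0 hα1 lam y0 ht k, integral_hk hα0 hα1 lam y0 ht k,
    norm_mul, norm_mul, Complex.norm_real, Real.norm_eq_abs,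
    abs_of_nonneg (Real.Gamma_pos_of_pos hb).le, mul_assoc]

lemma int_hk {α : ℝ} (hα0 : 0 < α) (hα1 : α < 1) (lam y0 : ℂ) {t : ℝ} (ht : 0 < t) (k : ℕ) :
    IntegrableOn (fun τ : ℝ => mlt' α lam y0 (k+1) τ * (((t - τ) ^ (-α) : ℝ) : ℂ))
      (Set.Ioo 0 t) := by
  have ha : 0 < α * ((k:ℕ)+1 : ℕ) := by positivity
  have hb : 0 < 1 - α := by linarith
  have h1 := ((beta_integrable ha hb ht).ofReal (𝕜 := ℂ)).const_mul (Ck α lam y0 (k+1))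
  exact (MeasureTheory.IntegrableOn.congr_fun h1
    (fun τ hτ => (hke lam y0 (k+1) hτ).symm) measurableSet_Ioo)

lemma meas_hk {α : ℝ} (lam y0 : ℂ) {t : ℝ} (k : ℕ) :
    AEStronglyMeasurable (fun τ : ℝ => mlt' α lam y0 k τ * (((t - τ) ^ (-α) : ℝ) : ℂ))
      (volume.restrict (Set.Ioo 0 t)) := by
  apply ContinuousOn.aestronglyMeasurable ?_ measurableSet_Ioo
  have c1 : ContinuousOn (fun τ : ℝ => α * k * τ ^ (α * k - 1)) (Set.Ioo 0 t) :=
    continuousOn_const.mul (fun τ hτ =>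
      (Real.continuousAt_rpow_const τ _ (Or.inl hτ.1.ne')).continuousWithinAt)
  have c2 : ContinuousOn (fun τ : ℝ => (t - τ) ^ (-α)) (Set.Ioo 0 t) := by
    intro τ hτ
    have hne : t - τ ≠ 0 := (sub_pos.mpr hτ.2).ne'
    exact ((Real.continuousAt_rpow_const _ _ (Or.inl hne)).comp
      ((continuous_const.sub continuous_id).continuousAt)).continuousWithinAt
  simp only [mlt']
  exact ((((continuousOn_const.mul
      (Complex.continuous_ofReal.comp_continuousOn c1)).div_const _).mul
      continuousOn_const).mul (Complex.continuous_ofReal.comp_continuousOn c2))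

lemma summable_norm_mlt_t {α : ℝ} (hα0 : 0 < α) (hα1 : α ≤ 1) (lam y0 : ℂ) {t : ℝ} (ht : 0 < t) :
    Summable (fun k : ℕ => ‖mlt α lam y0 k t‖) :=
  Summable.of_nonneg_of_le (fun k => norm_nonneg _)
    (fun k => norm_mlt hα0 hα1 lam y0 k ht.le le_rfl)
    ((summable_aux hα0 hα1 (C := ‖lam‖ * t ^ α) (by positivity) one_pos).mul_left ‖y0‖)

lemma summable_mlt_t {α : ℝ} (hα0 : 0 < α) (hα1 : α ≤ 1) (lam y0 : ℂ) {t : ℝ} (ht : 0 < t) :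
    Summable (fun k : ℕ => mlt α lam y0 k t) :=
  Summable.of_norm (summable_norm_mlt_t hα0 hα1 lam y0 ht)

lemma mlt'_zero (α : ℝ) (lam y0 : ℂ) (s : ℝ) : mlt' α lam y0 0 s = 0 := by
  simp [mlt']

lemma mlt'_succ_one (lam y0 : ℂ) (t : ℝ) (k : ℕ) :
    mlt' 1 lam y0 (k+1) t = lam * mlt 1 lam y0 k t := by
  rw [mlt', mlt]
  push_cast
  simp only [one_mul]
  rw [show (k:ℝ) + 1 - 1 = (k:ℝ) by ring,
    Real.Gamma_add_one (show ((k:ℝ)+1) ≠ 0 by positivity)]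
  have hΓk' : ((Real.Gamma ((k:ℝ)+1) : ℝ) : ℂ) ≠ 0 := by
    simpa using (Real.Gamma_pos_of_pos (show (0:ℝ) < (k:ℝ)+1 by positivity)).ne'
  have hk1 : ((k:ℂ)+1) ≠ 0 := Nat.cast_add_one_ne_zero k
  push_cast
  field_simp
  ring

end MLCaputoAux

set_option maxHeartbeats 2000000 in
open MLCaputoAux in
/-- For `0 < α ≤ 1` and `λ ∈ ℂ`, the function `y(t) = E_α(λ t^α) y(0)` solves the
Caputo fractional differential equation `∂_t^α y = λ y` for `t > 0`. -/
theorem mittagLeffler_solves_caputo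
    (α : ℝ) (hα0 : 0 < α) (hα1 : α ≤ 1) (lam y0 : ℂ)
    (y : ℝ → ℂ) (hy : ∀ t : ℝ, y t = mittagLeffler α (lam * ((t ^ α : ℝ) : ℂ)) * y0) :
    ∀ t : ℝ, 0 < t → caputoDeriv α y t = lam * y t := by
  intro t ht
  by_cases hA : α = 1
  · subst hA
    rw [caputoDeriv, if_pos rfl, deriv_y one_pos le_rfl lam y0 y hy ht, hy t,
      yrep 1 one_pos lam y0 ht.le, ← tsum_mul_left,
      Summable.tsum_eq_zero_add (summable_mlt' one_pos le_rfl lam y0 ht), mlt'_zero, zero_add]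
    exact tsum_congr fun k => mlt'_succ_one lam y0 t k
  · have hα1' : α < 1 := lt_of_le_of_ne hα1 hA
    have hb : 0 < 1 - α := by linarith
    have hΓb : (0:ℝ) < Real.Gamma (1-α) := Real.Gamma_pos_of_pos hb
    rw [caputoDeriv, if_neg hA]
    have hGc : Complex.Gamma (1 - (α:ℂ)) = ((Real.Gamma (1-α) : ℝ) : ℂ) := by
      rw [show (1 - (α:ℂ)) = ((1-α : ℝ) : ℂ) by push_cast; ring, Complex.Gamma_ofReal]
    have hfin : ∑' k : ℕ, ∫⁻ τ in Set.Ioo (0:ℝ) t,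
        ‖mlt' α lam y0 k τ * (((t - τ) ^ (-α) : ℝ) : ℂ)‖₊ ≠ ⊤ := by
      set c : ℕ → ℝ := fun k => Real.Gamma (1-α) * ‖lam‖ * ‖mlt α lam y0 (k-1) t‖ with hc
      have hsumc : Summable c := by
        rw [← summable_nat_add_iff 1]
        exact (summable_norm_mlt_t hα0 hα1 lam y0 ht).mul_left (Real.Gamma (1-α) * ‖lam‖)
      have hlin : ∀ k : ℕ, ∫⁻ τ in Set.Ioo (0:ℝ) t,
          ‖mlt' α lam y0 (k+1) τ * (((t - τ) ^ (-α) : ℝ) : ℂ)‖₊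
          = ENNReal.ofReal (Real.Gamma (1-α) * ‖lam‖ * ‖mlt α lam y0 k t‖) := by
        intro k
        simp only [← enorm_eq_nnnorm]
        rw [← ofReal_integral_norm_eq_lintegral_enorm (int_hk hα0 hα1' lam y0 ht k),
          norm_int hα0 hα1' lam y0 ht k]
      have h0 : ∫⁻ τ in Set.Ioo (0:ℝ) t,
          ‖mlt' α lam y0 0 τ * (((t - τ) ^ (-α) : ℝ) : ℂ)‖₊ = 0 := by
        simp [mlt'_zero]
      have hpt : ∀ k : ℕ, (∫⁻ τ in Set.Ioo (0:ℝ) t,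
          ‖mlt' α lam y0 k τ * (((t - τ) ^ (-α) : ℝ) : ℂ)‖₊) ≤ ENNReal.ofReal (c k) := by
        intro k
        cases k with
        | zero => rw [h0]; exact zero_le
        | succ n => rw [hlin n]; exact le_of_eq (by simp [hc])
      refine ne_top_of_le_ne_top (@ENNReal.ofReal_ne_top (∑' k, c k)) ?_
      calc ∑' k : ℕ, ∫⁻ τ in Set.Ioo (0:ℝ) t,
            ‖mlt' α lam y0 k τ * (((t - τ) ^ (-α) : ℝ) : ℂ)‖₊
          ≤ ∑' k, ENNReal.ofReal (c k) := ENNReal.tsum_le_tsum hpt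
        _ = ENNReal.ofReal (∑' k, c k) :=
            (ENNReal.ofReal_tsum_of_nonneg (fun k => by positivity) hsumc).symm
    have hswap : (∫ τ in Set.Ioo (0:ℝ) t, deriv y τ * (((t - τ) ^ (-α) : ℝ) : ℂ))
        = ∑' k : ℕ, ∫ τ in Set.Ioo (0:ℝ) t,
            mlt' α lam y0 k τ * (((t - τ) ^ (-α) : ℝ) : ℂ) := by
      rw [← MeasureTheory.integral_tsum (fun k => meas_hk lam y0 k) hfin]
      apply setIntegral_congr_fun measurableSet_Ioo
      intro τ hτ
      show deriv y τ * (((t - τ) ^ (-α) : ℝ) : ℂ)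
        = ∑' k : ℕ, mlt' α lam y0 k τ * (((t - τ) ^ (-α) : ℝ) : ℂ)
      rw [deriv_y hα0 hα1 lam y0 y hy hτ.1]
      exact tsum_mul_right.symm
    have hsumI : Summable (fun k : ℕ => ∫ τ in Set.Ioo (0:ℝ) t,
        mlt' α lam y0 (k+1) τ * (((t - τ) ^ (-α) : ℝ) : ℂ)) := by
      apply Summable.congr (((summable_mlt_t hα0 hα1 lam y0 ht).mul_left lam).mul_left
        ((Real.Gamma (1-α) : ℝ) : ℂ))
      exact fun k => (integral_hk hα0 hα1' lam y0 ht k).symm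
    have hsumI' : Summable (fun k : ℕ => ∫ τ in Set.Ioo (0:ℝ) t,
        mlt' α lam y0 k τ * (((t - τ) ^ (-α) : ℝ) : ℂ)) :=
      (summable_nat_add_iff 1).mp hsumI
    rw [hGc, hswap, Summable.tsum_eq_zero_add hsumI']
    have h0 : ∫ τ in Set.Ioo (0:ℝ) t, mlt' α lam y0 0 τ * (((t - τ) ^ (-α) : ℝ) : ℂ) = 0 := by
      simp [mlt'_zero]
    rw [h0, zero_add, tsum_congr (fun k => integral_hk hα0 hα1' lam y0 ht k),
      tsum_mul_left, tsum_mul_left, hy t, yrep α hα0 lam y0 ht.le]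
    have hne : ((Real.Gamma (1-α) : ℝ) : ℂ) ≠ 0 := by exact_mod_cast hΓb.ne'
    field_simp
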